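/- Let n ≥ 3 be an odd integer and G = D_n the dihedral group of order 2n. There exist short exact sequences of G-lattices 0 → N₋ → M̃₊ → ℤ[G/⟨σ⟩] → 0 and 0 → N₊ → M̃₋ → ℤ[G/⟨σ⟩] → 0, and neither of these sequences splits as a sequence of ℤ[G]-modules. -/

import Mathlib

open DihedralGroup

namespace Stmt7Aux

variable {n : ℕ} [NeZero n]

/-- Extend a vector on `Fin (n-1)` to `ZMod n` by zero. -/
def Eext (n : ℕ) [NeZero n] : (Fin (n - 1) → ℤ) →ₗ[ℤ] (ZMod n → ℤ) where
  toFun x := fun m => if h : m.val < n - 1 then x ⟨m.val, h⟩ else 0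
  map_add' x y := by ext m; by_cases h : m.val < n - 1 <;> simp [h]
  map_smul' a x := by ext m; by_cases h : m.val < n - 1 <;> simp [h]

lemma Eext_apply (x : Fin (n-1) → ℤ) (m : ZMod n) :
    Eext n x m = if h : m.val < n - 1 then x ⟨m.val, h⟩ else 0 := rfl

lemma Eext_single (j : Fin (n - 1)) :
    Eext n (Pi.single j 1) = fun m : ZMod n => if m = ((j : ℕ) : ZMod n) then 1 else 0 := by
  funext m
  rw [Eext_apply]
  have hjn : (j : ℕ) < n := lt_of_lt_of_le j.isLt (Nat.sub_le n 1)
  by_cases h : m.val < n - 1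
  · rw [dif_pos h, Pi.single_apply]
    congr 1
    have : ((⟨m.val, h⟩ : Fin (n-1)) = j) ↔ (m = ((j : ℕ) : ZMod n)) := by
      constructor
      · intro hh
        have : m.val = (j : ℕ) := by simpa [Fin.ext_iff] using hh
        rw [← this, ZMod.natCast_zmod_val]
      · intro hh
        have : m.val = (j : ℕ) := by rw [hh, ZMod.val_cast_of_lt hjn]
        exact Fin.ext this
    simp [this]
  · rw [dif_neg h]
    have : m ≠ ((j : ℕ) : ZMod n) := by
      intro hh
      apply h
      rw [hh, ZMod.val_cast_of_lt hjn]
      exact j.isLt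
    simp [this]

/-- The embedding `N → M̃`, `e_j ↦ w_{c+j+1} - w_{c+j}`. -/
def Fmap (c : ZMod n) : (Fin (n - 1) → ℤ) →ₗ[ℤ] ((ZMod n → ℤ) × ℤ) where
  toFun x := (fun i => Eext n x (i - c - 1) - Eext n x (i - c), 0)
  map_add' x y := by
    ext i
    · simp only [map_add, Pi.add_apply, Prod.fst_add]; ring
    · simp
  map_smul' a x := by
    ext i
    · simp only [map_smul, Pi.smul_apply, Prod.smul_fst, RingHom.id_apply, smul_eq_mul]; ring
    · simp

lemma Fmap_apply (c : ZMod n) (x : Fin (n-1) → ℤ) :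
    Fmap c x = (fun i => Eext n x (i - c - 1) - Eext n x (i - c), 0) := rfl

lemma Fmap_single (c : ZMod n) (j : Fin (n - 1)) :
    Fmap c (Pi.single j 1) =
      ((Pi.single (c + (j : ℕ) + 1) 1 - Pi.single (c + (j : ℕ)) 1 : ZMod n → ℤ), 0) := by
  rw [Fmap_apply]
  refine Prod.ext ?_ rfl
  funext i
  simp only [Eext_single, Pi.sub_apply, Pi.single_apply]
  have e1 : (i - c - 1 = ((j : ℕ) : ZMod n)) ↔ (i = c + ((j : ℕ) : ZMod n) + 1) := by
    constructor <;> intro h <;> linear_combination h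
  have e2 : (i - c = ((j : ℕ) : ZMod n)) ↔ (i = c + ((j : ℕ) : ZMod n)) := by
    constructor <;> intro h <;> linear_combination h
  rw [if_congr e1 rfl rfl, if_congr e2 rfl rfl]

-- step lemma : if all consecutive values of Eext agree then x = 0
lemma Eext_last (hn : 3 ≤ n) (x : Fin (n-1) → ℤ) :
    Eext n x (((n - 1 : ℕ) : ZMod n)) = 0 := by
  rw [Eext_apply, dif_neg]
  rw [ZMod.val_cast_of_lt (by omega)]
  omega

lemma Fmap_injective (hn : 3 ≤ n) (c : ZMod n) : Function.Injective (Fmap c) := by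
  intro x y hxy
  have h0 : Fmap c (x - y) = 0 := by rw [map_sub, hxy, sub_self]
  have hxy0 : x - y = 0 := by
    set u := x - y with hu
    have hfst : ∀ i : ZMod n, Eext n u (i - c - 1) - Eext n u (i - c) = 0 := by
      intro i
      have := congrArg Prod.fst h0
      exact congrFun this i
    have hstep : ∀ m : ZMod n, Eext n u m = Eext n u (m + 1) := by
      intro m
      have := hfst (m + c + 1)
      have e1 : m + c + 1 - c - 1 = m := by ring
      have e2 : m + c + 1 - c = m + 1 := by ring
      rw [e1, e2] at this
      linarith
    have hshiftk : ∀ (k : ℕ) (m : ZMod n), Eext n u m = Eext n u (m + (k : ℕ)) := by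
      intro k
      induction k with
      | zero => intro m; simp
      | succ k ih =>
        intro m
        have := hstep (m + (k : ℕ))
        rw [ih m] at *
        push_cast
        rw [this]; ring_nf
    have hzero : ∀ j : Fin (n - 1), u j = 0 := by
      intro j
      have hjval : Eext n u (((j : ℕ) : ZMod n)) = u j := by
        rw [Eext_apply]
        have hjn : (j : ℕ) < n := lt_of_lt_of_le j.isLt (Nat.sub_le n 1)
        rw [dif_pos (by rw [ZMod.val_cast_of_lt hjn]; exact j.isLt)]
        congr 1
        exact Fin.ext (by simp [ZMod.val_cast_of_lt hjn])
      have hstepped := hshiftk (n - 1 - (j : ℕ)) (((j : ℕ) : ZMod n))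
      have hcast : (((j : ℕ) : ZMod n)) + ((n - 1 - (j : ℕ) : ℕ) : ZMod n)
          = ((n - 1 : ℕ) : ZMod n) := by
        rw [← Nat.cast_add]; congr 1; omega
      rw [hcast, Eext_last hn] at hstepped
      rw [← hjval, hstepped]
    funext j; exact hzero j
  rw [sub_eq_zero] at hxy0; exact hxy0

-- sums over ZMod n
lemma sum_zmod_shift (v : ZMod n → ℤ) : ∑ i : ZMod n, v (i - 1) = ∑ i : ZMod n, v i :=
  Fintype.sum_equiv (Equiv.subRight (1 : ZMod n)) _ _ (fun _ => rfl)

lemma sum_zmod_neg (v : ZMod n → ℤ) : ∑ i : ZMod n, v (-i) = ∑ i : ZMod n, v i :=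
  Fintype.sum_equiv (Equiv.neg (ZMod n)) _ _ (fun _ => rfl)

lemma sum_zmod_range (v : ZMod n → ℤ) : ∑ i : ZMod n, v i = ∑ s ∈ Finset.range n, v ((s : ℕ) : ZMod n) := by
  rw [← Fin.sum_univ_eq_sum_range]
  refine (Fintype.sum_equiv ⟨fun i : Fin n => ((i : ℕ) : ZMod n),
    fun m => ⟨m.val, m.val_lt⟩, fun i => Fin.ext (ZMod.val_cast_of_lt i.isLt),
    fun m => ZMod.natCast_zmod_val m⟩ _ _ (fun i => rfl)).symm

lemma Fmap_sum (c : ZMod n) (x : Fin (n-1) → ℤ) :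
    ∑ i : ZMod n, (Fmap c x).1 i = 0 := by
  rw [Fmap_apply]
  simp only
  rw [Finset.sum_sub_distrib]
  have h1 : ∑ i : ZMod n, Eext n x (i - c - 1) = ∑ m : ZMod n, Eext n x m :=
    Fintype.sum_equiv (Equiv.subRight (c + 1)) _ _
      (fun i => by simp only [Equiv.subRight_apply]; congr 1; ring)
  have h2 : ∑ i : ZMod n, Eext n x (i - c) = ∑ m : ZMod n, Eext n x m :=
    Fintype.sum_equiv (Equiv.subRight c) _ _
      (fun i => by simp only [Equiv.subRight_apply])
  rw [h1, h2, sub_self]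

lemma Fmap_surj_onto_ker (hn : 3 ≤ n) (c : ZMod n) (v : ZMod n → ℤ)
    (hv : ∑ i : ZMod n, v i = 0) : ∃ x, Fmap c x = (v, 0) := by
  refine ⟨fun t => -∑ s ∈ Finset.range ((t : ℕ) + 1), v (c + (s : ℕ)), ?_⟩
  set x : Fin (n-1) → ℤ := fun t => -∑ s ∈ Finset.range ((t : ℕ) + 1), v (c + (s : ℕ)) with hx
  have hsum : ∑ s ∈ Finset.range n, v (c + (s : ℕ)) = 0 := by
    have h1 : ∑ i : ZMod n, v (c + i) = ∑ i : ZMod n, v i :=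
      Fintype.sum_equiv (Equiv.addLeft c) _ _ (fun _ => rfl)
    have h2 := sum_zmod_range (fun i => v (c + i))
    rw [← h2, h1, hv]
  have hEx : ∀ (t : ℕ), t < n - 1 →
      Eext n x ((t : ℕ) : ZMod n) = -∑ s ∈ Finset.range (t + 1), v (c + (s : ℕ)) := by
    intro t ht
    rw [Eext_apply, dif_pos (by rw [ZMod.val_cast_of_lt (by omega)]; exact ht)]
    simp only [hx]
    congr 2
    rw [ZMod.val_cast_of_lt (by omega : t < n)]
  rw [Fmap_apply]
  refine Prod.ext ?_ rfl
  funext i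
  simp only
  obtain ⟨t, htn, hti⟩ : ∃ t : ℕ, t < n ∧ i - c = ((t : ℕ) : ZMod n) :=
    ⟨(i - c).val, ZMod.val_lt _, (ZMod.natCast_zmod_val (i - c)).symm⟩
  have hi : i = c + ((t : ℕ) : ZMod n) := by rw [← hti]; ring
  rcases Nat.eq_zero_or_pos t with ht0 | htpos
  · -- t = 0 : i = c
    have hic : i = c := by rw [hi, ht0]; simp
    have h1 : i - c - 1 = ((n - 1 : ℕ) : ZMod n) := by
      rw [hic, sub_self, zero_sub]
      have : ((n - 1 : ℕ) : ZMod n) + 1 = 0 := by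
        have : ((n - 1 : ℕ) : ZMod n) + ((1 : ℕ) : ZMod n) = ((n : ℕ) : ZMod n) := by
          rw [← Nat.cast_add]; congr 1; omega
        simpa [ZMod.natCast_self] using this
      linear_combination -this
    have h2 : i - c = ((0 : ℕ) : ZMod n) := by rw [hti, ht0]
    rw [h1, h2, Eext_last hn, hEx 0 (by omega)]
    simp [hic]
  · -- t ≥ 1
    have h2 : Eext n x (i - c) = if t < n - 1 then -∑ s ∈ Finset.range (t + 1), v (c + (s : ℕ)) else 0 := by
      by_cases h : t < n - 1
      · rw [if_pos h, hti, hEx t h]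
      · rw [if_neg h, hti, Eext_apply, dif_neg]
        rw [ZMod.val_cast_of_lt htn]; omega
    have h1c : i - c - 1 = (((t - 1 : ℕ)) : ZMod n) := by
      rw [hti]
      have : ((t : ℕ) : ZMod n) = ((t - 1 : ℕ) : ZMod n) + 1 := by
        have : (t - 1) + 1 = t := by omega
        rw [← this]; push_cast; ring
      rw [this]; ring
    have h1 : Eext n x (i - c - 1) = -∑ s ∈ Finset.range t, v (c + (s : ℕ)) := by
      rw [h1c, hEx (t - 1) (by omega), show t - 1 + 1 = t from by omega]
    rcases lt_or_ge t (n - 1) with hlt | hge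
    · rw [h1, h2, if_pos hlt, Finset.sum_range_succ]
      rw [hi]; ring
    · have ht' : t = n - 1 := by omega
      rw [h1, h2, if_neg (by omega)]
      have : ∑ s ∈ Finset.range t, v (c + (s : ℕ)) + v (c + ((t : ℕ) : ZMod n)) = 0 := by
        have h' : ∑ s ∈ Finset.range (t + 1), v (c + (s : ℕ)) = 0 := by
          rw [← hsum]; congr 1; congr 1; omega
        rwa [Finset.sum_range_succ] at h'
      rw [hi]
      linarith

lemma prod_decomp (x : (ZMod n → ℤ) × ℤ) :
    x = (∑ i : ZMod n, x.1 i • ((Pi.single i 1 : ZMod n → ℤ), (0:ℤ)))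
        + x.2 • ((0 : ZMod n → ℤ), (1:ℤ)) := by
  refine Prod.ext ?_ ?_
  · funext j
    rw [Prod.fst_add, Prod.fst_sum]
    simp [Finset.sum_apply, Pi.single_apply, mul_ite, Finset.sum_ite_eq,
      Finset.sum_ite_eq']
  · rw [Prod.snd_add, Prod.snd_sum]
    simp

lemma L_apply {W : Type*} [AddCommGroup W] [Module ℤ W]
    (L : ((ZMod n → ℤ) × ℤ) →ₗ[ℤ] W) (v : ZMod n → ℤ) (z : ℤ) :
    L (v, z) = (∑ i : ZMod n, v i • L ((Pi.single i 1 : ZMod n → ℤ), 0)) + z • L (0, 1) := by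
  conv_lhs => rw [prod_decomp (v, z)]
  simp only [map_add, map_sum, LinearMap.map_smul]
  simp only [← Int.cast_smul_eq_zsmul ℤ, Int.cast_id]

lemma M_r_apply (ρM : Representation ℤ (DihedralGroup n) ((ZMod n → ℤ) × ℤ))
    (hσ : ∀ i : ZMod n, ρM (r 1) (Pi.single i 1, 0) = (Pi.single (i + 1) 1, 0))
    (hσw : ρM (r 1) (0, 1) = (0, 1)) (v : ZMod n → ℤ) (z : ℤ) :
    ρM (r 1) (v, z) = (fun i => v (i - 1), z) := by
  rw [L_apply]
  simp only [hσ, hσw]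
  refine Prod.ext ?_ ?_
  · funext j
    rw [Prod.fst_add, Prod.fst_sum]
    simp only [Prod.smul_fst, Finset.sum_apply, Pi.smul_apply, Pi.add_apply,
      Pi.single_apply, smul_eq_mul, Pi.zero_apply, mul_zero, mul_one]
    rw [Finset.sum_congr rfl (fun i _ => by
      have h' : (j = i + 1) ↔ (i = j - 1) := by
        constructor <;> intro h <;> linear_combination -h
      rw [if_congr h' rfl rfl])]
    simp [Finset.sum_ite_eq', mul_ite]
  · rw [Prod.snd_add, Prod.snd_sum]
    simp

lemma M_sr_apply (ε : ℤ) (ρM : Representation ℤ (DihedralGroup n) ((ZMod n → ℤ) × ℤ))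
    (hτ : ∀ i : ZMod n, ρM (sr 0) (Pi.single i 1, 0) = (ε • Pi.single (-i) 1, 0))
    (hτw : ρM (sr 0) (0, 1) = (ε • ∑ i : ZMod n, Pi.single i 1, -ε)) (v : ZMod n → ℤ) (z : ℤ) :
    ρM (sr 0) (v, z) = (fun i => ε * v (-i) + ε * z, -(ε * z)) := by
  rw [L_apply]
  simp only [hτ, hτw]
  refine Prod.ext ?_ ?_
  · funext j
    rw [Prod.fst_add, Prod.fst_sum]
    simp only [Prod.smul_fst, Finset.sum_apply, Pi.smul_apply, Pi.add_apply,
      Pi.single_apply, smul_eq_mul, mul_ite, mul_one, mul_zero]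
    have h1 : ∑ x : ZMod n, (if j = -x then v x * ε else 0) = ε * v (-j) := by
      rw [Finset.sum_congr rfl (fun i _ => by
        have h' : (j = -i) ↔ (i = -j) := by constructor <;> intro h <;> linear_combination h
        rw [if_congr h' rfl rfl])]
      simp [Finset.sum_ite_eq', mul_comm]
    have h2 : (∑ x : ZMod n, if j = x then (1:ℤ) else 0) = 1 := by
      simp [Finset.sum_ite_eq]
    rw [h1, h2]
    ring
  · rw [Prod.snd_add, Prod.snd_sum]
    simp [mul_comm]

lemma equiv_all {V W : Type*} [AddCommGroup V] [Module ℤ V] [AddCommGroup W] [Module ℤ W]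
    (ρ₁ : Representation ℤ (DihedralGroup n) V) (ρ₂ : Representation ℤ (DihedralGroup n) W)
    (f : V →ₗ[ℤ] W)
    (h1 : ∀ x, f (ρ₁ (r 1) x) = ρ₂ (r 1) (f x))
    (h2 : ∀ x, f (ρ₁ (sr 0) x) = ρ₂ (sr 0) (f x)) :
    ∀ (g : DihedralGroup n) (x : V), f (ρ₁ g x) = ρ₂ g (f x) := by
  have hr : ∀ (k : ℕ) (x : V), f (ρ₁ (r (k : ZMod n)) x) = ρ₂ (r (k : ZMod n)) (f x) := by
    intro k
    induction k with
    | zero =>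
      intro x
      simp only [Nat.cast_zero, ← one_def, map_one, Module.End.one_apply]
    | succ k ih =>
      intro x
      have hrw : (((k + 1 : ℕ)) : ZMod n) = (k : ZMod n) + 1 := by push_cast; ring
      have hmul : r ((k : ZMod n) + 1) = r (k : ZMod n) * r 1 := (r_mul_r _ _).symm
      rw [hrw, hmul, map_mul, map_mul, Module.End.mul_apply, Module.End.mul_apply,
        ih, h1]
  have hrz : ∀ (k : ZMod n) (x : V), f (ρ₁ (r k) x) = ρ₂ (r k) (f x) := by
    intro k x
    have := hr k.val x
    rwa [ZMod.natCast_zmod_val] at this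
  intro g x
  cases g with
  | r k => exact hrz k x
  | sr k =>
    have hmul : sr k = sr 0 * r k := by rw [sr_mul_r, zero_add]
    rw [hmul, map_mul, map_mul, Module.End.mul_apply, Module.End.mul_apply, h2, hrz]


end Stmt7Aux

namespace Stmt7Aux
variable {n : ℕ} [NeZero n]

lemma n2_lt (hn : 3 ≤ n) : n - 2 < n - 1 := by omega

lemma pair_sub (a b : ZMod n → ℤ) :
    ((a - b : ZMod n → ℤ), (0:ℤ)) = ((a, (0:ℤ)) - (b, (0:ℤ))) := by
  refine Prod.ext rfl (by simp)

lemma F_comm_r (hn : 3 ≤ n) (c : ZMod n)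
    (ρN : Representation ℤ (DihedralGroup n) (Fin (n - 1) → ℤ))
    (hNσ : ∀ (j : Fin (n - 1)) (h : (j : ℕ) + 1 < n - 1),
      ρN (r 1) (Pi.single j 1) = Pi.single (⟨(j : ℕ) + 1, h⟩ : Fin (n - 1)) 1)
    (hNσ' : ρN (r 1) (Pi.single (⟨n - 2, n2_lt hn⟩ : Fin (n - 1)) 1)
      = -∑ i : Fin (n - 1), Pi.single i 1)
    (ρM : Representation ℤ (DihedralGroup n) ((ZMod n → ℤ) × ℤ))
    (hMσ : ∀ i : ZMod n, ρM (r 1) (Pi.single i 1, 0) = (Pi.single (i + 1) 1, 0)) :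
    ∀ x, Fmap c (ρN (r 1) x) = ρM (r 1) (Fmap c x) := by
  have key : (Fmap c ∘ₗ (ρN (r 1) : (Fin (n-1) → ℤ) →ₗ[ℤ] _))
      = ((ρM (r 1) : ((ZMod n → ℤ) × ℤ) →ₗ[ℤ] _) ∘ₗ Fmap c) := by
    apply Module.Basis.ext (Pi.basisFun ℤ (Fin (n - 1)))
    intro j
    simp only [LinearMap.comp_apply, Pi.basisFun_apply]
    by_cases h : (j : ℕ) + 1 < n - 1
    · rw [hNσ j h, Fmap_single, Fmap_single, pair_sub, pair_sub, map_sub, hMσ, hMσ,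
        ← pair_sub, ← pair_sub]
      simp only [Fin.val_mk]
      have e1 : c + ((((j:ℕ) + 1 : ℕ)) : ZMod n) + 1 = c + ((j:ℕ) : ZMod n) + 1 + 1 := by
        push_cast; ring
      have e2 : c + ((((j:ℕ) + 1 : ℕ)) : ZMod n) = c + ((j:ℕ) : ZMod n) + 1 := by
        push_cast; ring
      rw [e1, e2]
    · have hjv : (j : ℕ) = n - 2 := by have := j.isLt; omega
      have hj : j = (⟨n - 2, n2_lt hn⟩ : Fin (n - 1)) := Fin.ext (by simp [hjv])
      have hc1 : c + (((n-2 : ℕ)) : ZMod n) + 1 + 1 = c := by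
        have h2 : ((n - 2 : ℕ) : ZMod n) + ((2:ℕ) : ZMod n) = ((n:ℕ) : ZMod n) := by
          rw [← Nat.cast_add]; congr 1; omega
        rw [ZMod.natCast_self] at h2
        push_cast at h2
        linear_combination h2
      have hc2 : c + (((n-2 : ℕ)) : ZMod n) + 1 = c + ((n-1 : ℕ) : ZMod n) := by
        have h2 : ((n - 2 : ℕ) : ZMod n) + ((1:ℕ) : ZMod n) = ((n-1:ℕ) : ZMod n) := by
          rw [← Nat.cast_add]; congr 1; omega
        push_cast at h2
        linear_combination h2
      have htel : ∑ i : Fin (n-1),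
          ((Pi.single (c + (i:ℕ) + 1) 1 - Pi.single (c + (i:ℕ)) 1 : ZMod n → ℤ), (0:ℤ))
          = ((Pi.single (c + ((n-1 : ℕ) : ZMod n)) 1 - Pi.single c 1 : ZMod n → ℤ), (0:ℤ)) := by
        have hfin := Fin.sum_univ_eq_sum_range
          (fun k : ℕ => ((Pi.single (c + ((k+1 : ℕ) : ZMod n)) 1
              - Pi.single (c + (k : ℕ)) 1 : ZMod n → ℤ), (0:ℤ))) (n - 1)
        have hcongr : ∑ i : Fin (n-1),
            ((Pi.single (c + (i:ℕ) + 1) 1 - Pi.single (c + (i:ℕ)) 1 : ZMod n → ℤ), (0:ℤ))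
            = ∑ i : Fin (n-1),
            ((Pi.single (c + (((i:ℕ)+1 : ℕ) : ZMod n)) 1
              - Pi.single (c + ((i:ℕ) : ℕ)) 1 : ZMod n → ℤ), (0:ℤ)) := by
          refine Finset.sum_congr rfl (fun i _ => ?_)
          have e3 : c + ((((i:ℕ) + 1 : ℕ)) : ZMod n) = c + ((i:ℕ) : ZMod n) + 1 := by
            push_cast; ring
          rw [e3]
        rw [hcongr, hfin]
        have hts := Finset.sum_range_sub
          (fun k : ℕ => ((Pi.single (c + (k : ℕ)) 1 : ZMod n → ℤ), (0:ℤ))) (n - 1)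
        rw [Finset.sum_congr rfl (fun k _ => pair_sub (Pi.single (c + ((k+1:ℕ) : ZMod n)) 1)
          (Pi.single (c + (k : ℕ)) 1)), hts, ← pair_sub]
        norm_num
      have hRHS : ρM (r 1) (Fmap c (Pi.single (⟨n - 2, n2_lt hn⟩ : Fin (n - 1)) 1))
          = ((Pi.single c 1 - Pi.single (c + ((n-1:ℕ) : ZMod n)) 1 : ZMod n → ℤ), (0:ℤ)) := by
        rw [Fmap_single, pair_sub, map_sub, hMσ, hMσ]
        simp only [Fin.val_mk]
        rw [hc1, hc2, ← pair_sub]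
      have hLHS : Fmap c (ρN (r 1) (Pi.single (⟨n - 2, n2_lt hn⟩ : Fin (n - 1)) 1))
          = ((Pi.single c 1 - Pi.single (c + ((n-1:ℕ) : ZMod n)) 1 : ZMod n → ℤ), (0:ℤ)) := by
        rw [hNσ', map_neg, map_sum, Finset.sum_congr rfl (fun i _ => Fmap_single c i), htel]
        refine Prod.ext ?_ (by simp)
        simp only [Prod.fst_neg, Prod.fst_sub]
        exact neg_sub _ _
      rw [hj, hLHS, hRHS]
  intro x
  exact LinearMap.congr_fun key x

lemma F_comm_sr (hn : 3 ≤ n) (c : ZMod n) (hc : c + c = 1) (ε : ℤ)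
    (ρN : Representation ℤ (DihedralGroup n) (Fin (n - 1) → ℤ))
    (hNτ : ∀ j : Fin (n - 1), ρN (sr 0) (Pi.single j 1) = ε • Pi.single j.rev 1)
    (ρM : Representation ℤ (DihedralGroup n) ((ZMod n → ℤ) × ℤ))
    (hMτ : ∀ i : ZMod n, ρM (sr 0) (Pi.single i 1, 0) = ((-ε) • Pi.single (-i) 1, 0)) :
    ∀ x, Fmap c (ρN (sr 0) x) = ρM (sr 0) (Fmap c x) := by
  have key : (Fmap c ∘ₗ (ρN (sr 0) : (Fin (n-1) → ℤ) →ₗ[ℤ] _))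
      = ((ρM (sr 0) : ((ZMod n → ℤ) × ℤ) →ₗ[ℤ] _) ∘ₗ Fmap c) := by
    apply Module.Basis.ext (Pi.basisFun ℤ (Fin (n - 1)))
    intro j
    simp only [LinearMap.comp_apply, Pi.basisFun_apply]
    rw [hNτ j, LinearMap.map_smul, Fmap_single, Fmap_single, pair_sub, pair_sub, map_sub, hMτ, hMτ]
    have hrev : (((j.rev : ℕ)) : ZMod n) = - ((j:ℕ) : ZMod n) - 2 := by
      have h1 : (j.rev : ℕ) + ((j:ℕ) + 2) = n := by
        have h2 := j.isLt
        have h3 : (j.rev : ℕ) = n - 1 - ((j:ℕ) + 1) := rfl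
        omega
      have h4 := congrArg (Nat.cast : ℕ → ZMod n) h1
      push_cast at h4
      rw [ZMod.natCast_self] at h4
      linear_combination h4
    have eA : c + (((j.rev : ℕ)) : ZMod n) + 1 = -(c + ((j:ℕ) : ZMod n)) := by
      rw [hrev]; linear_combination hc
    have eB : c + (((j.rev : ℕ)) : ZMod n) = -(c + ((j:ℕ) : ZMod n) + 1) := by
      rw [hrev]; linear_combination hc
    rw [eA, eB]
    refine Prod.ext ?_ (by simp)
    simp only [Prod.smul_fst, Prod.fst_sub, smul_sub, neg_smul]
    abel
  intro x
  exact LinearMap.congr_fun key x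

end Stmt7Aux

namespace Stmt7Aux
variable {n : ℕ} [NeZero n]

def qmap (a b a' b' : ℤ) : ((ZMod n → ℤ) × ℤ) →ₗ[ℤ] ℤ × ℤ where
  toFun x := ((∑ i : ZMod n, x.1 i) * a + x.2 * b, (∑ i : ZMod n, x.1 i) * a' + x.2 * b')
  map_add' x y := by
    refine Prod.ext ?_ ?_ <;>
      simp only [Prod.fst_add, Prod.snd_add, Pi.add_apply, Finset.sum_add_distrib] <;> ring
  map_smul' t x := by
    refine Prod.ext ?_ ?_ <;>
      simp only [Prod.smul_fst, Prod.smul_snd, Pi.smul_apply, smul_eq_mul, ← Finset.mul_sum,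
        RingHom.id_apply] <;> ring

lemma qmap_apply (a b a' b' : ℤ) (x : (ZMod n → ℤ) × ℤ) :
    qmap a b a' b' x
      = ((∑ i : ZMod n, x.1 i) * a + x.2 * b, (∑ i : ZMod n, x.1 i) * a' + x.2 * b') := rfl

lemma sum_single_zmod (t : ℤ) : ∑ i : ZMod n, Pi.single (0 : ZMod n) t i = t := by
  simp [Pi.single_apply, Finset.sum_ite_eq]

lemma master (hn : 3 ≤ n) (m : ℕ) (hm : n = 2 * m + 1)
    (c : ZMod n) (hc : c + c = 1) (δ a b a' b' : ℤ)
    (h1 : δ * a = a') (h2 : δ * ((n : ℤ) * a - b) = b')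
    (h3 : δ * a' = a) (h4 : δ * ((n : ℤ) * a' - b') = b)
    (hdet : a * b' - a' * b = 1)
    (hnosol : ∀ w z : ℤ, ¬ ((n : ℤ) * w * a + z * b = 1 ∧ (n : ℤ) * w * a' + z * b' = 0))
    (ρN : Representation ℤ (DihedralGroup n) (Fin (n - 1) → ℤ))
    (hNσ : ∀ (j : Fin (n - 1)) (h : (j : ℕ) + 1 < n - 1),
      ρN (r 1) (Pi.single j 1) = Pi.single (⟨(j : ℕ) + 1, h⟩ : Fin (n - 1)) 1)
    (hNσ' : ρN (r 1) (Pi.single (⟨n - 2, n2_lt hn⟩ : Fin (n - 1)) 1)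
      = -∑ i : Fin (n - 1), Pi.single i 1)
    (hNτ : ∀ j : Fin (n - 1), ρN (sr 0) (Pi.single j 1) = (-δ) • Pi.single j.rev 1)
    (ρM : Representation ℤ (DihedralGroup n) ((ZMod n → ℤ) × ℤ))
    (hMσ : ∀ i : ZMod n, ρM (r 1) (Pi.single i 1, 0) = (Pi.single (i + 1) 1, 0))
    (hMσw : ρM (r 1) (0, 1) = (0, 1))
    (hMτ : ∀ i : ZMod n, ρM (sr 0) (Pi.single i 1, 0) = (δ • Pi.single (-i) 1, 0))
    (hMτw : ρM (sr 0) (0, 1) = (δ • ∑ i : ZMod n, Pi.single i 1, -δ))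
    (ρA : Representation ℤ (DihedralGroup n) (ℤ × ℤ))
    (hAσ : ∀ x : ℤ × ℤ, ρA (r 1) x = x)
    (hAτ : ∀ x : ℤ × ℤ, ρA (sr 0) x = (x.2, x.1)) :
    ∃ (f : (Fin (n - 1) → ℤ) →ₗ[ℤ] ((ZMod n → ℤ) × ℤ))
        (q : ((ZMod n → ℤ) × ℤ) →ₗ[ℤ] ℤ × ℤ),
      (∀ (g : DihedralGroup n) x, f (ρN g x) = ρM g (f x)) ∧
      (∀ (g : DihedralGroup n) x, q (ρM g x) = ρA g (q x)) ∧
      Function.Injective f ∧ Function.Surjective q ∧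
      LinearMap.range f = LinearMap.ker q ∧
      ¬ ∃ s : ℤ × ℤ →ₗ[ℤ] ((ZMod n → ℤ) × ℤ),
          (∀ (g : DihedralGroup n) y, ρM g (s y) = s (ρA g y)) ∧
          q.comp s = LinearMap.id := by
  have hnz : (n : ℤ) = 2 * (m : ℤ) + 1 := by exact_mod_cast congrArg (Nat.cast : ℕ → ℤ) hm
  have hcard : (Finset.univ : Finset (ZMod n)).card = n := by
    rw [Finset.card_univ, ZMod.card]
  refine ⟨Fmap c, qmap a b a' b', ?_, ?_, Fmap_injective hn c, ?_, ?_, ?_⟩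
  · -- f equivariance
    refine equiv_all ρN ρM (Fmap c) (F_comm_r hn c ρN hNσ hNσ' ρM hMσ)
      (F_comm_sr hn c hc (-δ) ρN hNτ ρM (fun i => by rw [hMτ i, neg_neg]))
  · -- q equivariance
    refine equiv_all ρM ρA (qmap a b a' b') ?_ ?_
    · rintro ⟨v, z⟩
      rw [M_r_apply ρM hMσ hMσw, hAσ, qmap_apply, qmap_apply]
      simp only
      rw [sum_zmod_shift]
    · rintro ⟨v, z⟩
      rw [M_sr_apply δ ρM hMτ hMτw, hAτ, qmap_apply, qmap_apply]
      simp only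
      have hsum : ∑ i : ZMod n, (δ * v (-i) + δ * z) = δ * (∑ i : ZMod n, v i) + (n:ℤ) * (δ * z) := by
        rw [Finset.sum_add_distrib, ← Finset.mul_sum, sum_zmod_neg, Finset.sum_const, hcard,
          nsmul_eq_mul]
      rw [hsum]
      refine Prod.ext ?_ ?_ <;> simp only
      · linear_combination (∑ i : ZMod n, v i) * h1 + z * h2
      · linear_combination (∑ i : ZMod n, v i) * h3 + z * h4
  · -- surjectivity
    rintro ⟨x, y⟩
    refine ⟨(Pi.single (0 : ZMod n) (b' * x - b * y), a * y - a' * x), ?_⟩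
    rw [qmap_apply]
    simp only [sum_single_zmod]
    refine Prod.ext ?_ ?_ <;> simp only
    · linear_combination x * hdet
    · linear_combination y * hdet
  · -- range = ker
    ext x
    simp only [LinearMap.mem_range, LinearMap.mem_ker]
    constructor
    · rintro ⟨y, rfl⟩
      rw [qmap_apply]
      have h1' : ∑ i : ZMod n, (Fmap c y).1 i = 0 := Fmap_sum c y
      have h2' : (Fmap c y).2 = 0 := rfl
      rw [h1', h2']
      simp
    · intro hx
      rw [qmap_apply, Prod.mk.injEq] at hx
      simp only [Prod.fst_zero, Prod.snd_zero] at hx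
      obtain ⟨hX, hY⟩ := hx
      have hs : ∑ i : ZMod n, x.1 i = 0 := by
        linear_combination b' * hX - b * hY - (∑ i : ZMod n, x.1 i) * hdet
      have hz : x.2 = 0 := by
        linear_combination a * hY - a' * hX - x.2 * hdet
      obtain ⟨y, hy⟩ := Fmap_surj_onto_ker hn c x.1 hs
      exact ⟨y, by rw [hy]; exact Prod.ext rfl hz.symm⟩
  · -- non-splitting
    rintro ⟨s, hsequiv, hqs⟩
    have hfix : ρM (r 1) (s (1, 0)) = s (1, 0) := by
      rw [hsequiv (r 1) (1, 0), hAσ]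
    have hform := M_r_apply ρM hMσ hMσw (s (1, 0)).1 (s (1, 0)).2
    rw [Prod.mk.eta] at hform
    rw [hform] at hfix
    set v : ZMod n → ℤ := (s (1, 0)).1 with hv
    set z : ℤ := (s (1, 0)).2 with hz
    have hshift : ∀ i : ZMod n, v (i - 1) = v i := fun i =>
      congrFun (congrArg Prod.fst hfix) i
    have hNat : ∀ k : ℕ, v ((k : ℕ) : ZMod n) = v 0 := by
      intro k
      induction k with
      | zero => norm_num
      | succ k ih =>
        have := hshift (((k + 1 : ℕ)) : ZMod n)
        have e : (((k + 1 : ℕ)) : ZMod n) - 1 = ((k : ℕ) : ZMod n) := by push_cast; ring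
        rw [e, ih] at this
        rw [← this]
    have hconst : ∀ i : ZMod n, v i = v 0 := by
      intro i
      conv_lhs => rw [← ZMod.natCast_zmod_val i]
      exact hNat i.val
    have hsumv : ∑ i : ZMod n, v i = (n : ℤ) * v 0 := by
      rw [Finset.sum_congr rfl (fun i _ => hconst i), Finset.sum_const, hcard, nsmul_eq_mul]
    have hq1 : qmap a b a' b' (s (1, 0)) = (1, 0) := by
      have := LinearMap.ext_iff.mp hqs (1, 0)
      simpa [LinearMap.comp_apply] using this
    rw [qmap_apply, ← hv, ← hz, hsumv, Prod.mk.injEq] at hq1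
    exact hnosol (v 0) z ⟨hq1.1, hq1.2⟩

end Stmt7Aux

/-- **Hoshi–Kang–Yamasaki, Lemma 4.5.**
Let `n ≥ 3` be odd and `G = Dₙ`, with `σ = r 1`, `τ = sr 0`.  `ρMp`/`ρMm` are the
rank-`(n+1)` lattices `M̃₊`/`M̃₋`, `ρNp`/`ρNm` are `N₊`/`N₋`, and `ρA` is `ℤ[G/⟨σ⟩]`.
There are short exact sequences `0 → N₋ → M̃₊ → ℤ[G/⟨σ⟩] → 0` and
`0 → N₊ → M̃₋ → ℤ[G/⟨σ⟩] → 0` of `G`-lattices, and neither splits as a sequence of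
`ℤ[G]`-modules. -/
theorem stmt7 (n : ℕ) (hn : 3 ≤ n) (hodd : Odd n) [NeZero n]
    (ρMp : Representation ℤ (DihedralGroup n) ((ZMod n → ℤ) × ℤ))
    (hMpσ : ∀ i : ZMod n, ρMp (r 1) (Pi.single i 1, 0) = (Pi.single (i + 1) 1, 0))
    (hMpσw : ρMp (r 1) (0, 1) = (0, 1))
    (hMpτ : ∀ i : ZMod n, ρMp (sr 0) (Pi.single i 1, 0) = (Pi.single (-i) 1, 0))
    (hMpτw : ρMp (sr 0) (0, 1) = (∑ i : ZMod n, Pi.single i 1, -1))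
    (ρMm : Representation ℤ (DihedralGroup n) ((ZMod n → ℤ) × ℤ))
    (hMmσ : ∀ i : ZMod n, ρMm (r 1) (Pi.single i 1, 0) = (Pi.single (i + 1) 1, 0))
    (hMmσw : ρMm (r 1) (0, 1) = (0, 1))
    (hMmτ : ∀ i : ZMod n, ρMm (sr 0) (Pi.single i 1, 0) = (-Pi.single (-i) 1, 0))
    (hMmτw : ρMm (sr 0) (0, 1) = (-∑ i : ZMod n, Pi.single i 1, 1))
    (ρNp : Representation ℤ (DihedralGroup n) (Fin (n - 1) → ℤ))
    (hNpσ : ∀ (j : Fin (n - 1)) (h : (j : ℕ) + 1 < n - 1),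
      ρNp (r 1) (Pi.single j 1) = Pi.single (⟨(j : ℕ) + 1, h⟩ : Fin (n - 1)) 1)
    (hNpσ' : ρNp (r 1) (Pi.single (⟨n - 2, by omega⟩ : Fin (n - 1)) 1)
      = -∑ i : Fin (n - 1), Pi.single i 1)
    (hNpτ : ∀ j : Fin (n - 1), ρNp (sr 0) (Pi.single j 1) = Pi.single j.rev 1)
    (ρNm : Representation ℤ (DihedralGroup n) (Fin (n - 1) → ℤ))
    (hNmσ : ∀ (j : Fin (n - 1)) (h : (j : ℕ) + 1 < n - 1),
      ρNm (r 1) (Pi.single j 1) = Pi.single (⟨(j : ℕ) + 1, h⟩ : Fin (n - 1)) 1)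
    (hNmσ' : ρNm (r 1) (Pi.single (⟨n - 2, by omega⟩ : Fin (n - 1)) 1)
      = -∑ i : Fin (n - 1), Pi.single i 1)
    (hNmτ : ∀ j : Fin (n - 1), ρNm (sr 0) (Pi.single j 1) = -Pi.single j.rev 1)
    (ρA : Representation ℤ (DihedralGroup n) (ℤ × ℤ))
    (hAσ : ∀ x : ℤ × ℤ, ρA (r 1) x = x)
    (hAτ : ∀ x : ℤ × ℤ, ρA (sr 0) x = (x.2, x.1)) :
    (∃ (f : (Fin (n - 1) → ℤ) →ₗ[ℤ] ((ZMod n → ℤ) × ℤ))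
        (q : ((ZMod n → ℤ) × ℤ) →ₗ[ℤ] ℤ × ℤ),
      (∀ (g : DihedralGroup n) x, f (ρNm g x) = ρMp g (f x)) ∧
      (∀ (g : DihedralGroup n) x, q (ρMp g x) = ρA g (q x)) ∧
      Function.Injective f ∧ Function.Surjective q ∧
      LinearMap.range f = LinearMap.ker q ∧
      ¬ ∃ s : ℤ × ℤ →ₗ[ℤ] ((ZMod n → ℤ) × ℤ),
          (∀ (g : DihedralGroup n) y, ρMp g (s y) = s (ρA g y)) ∧
          q.comp s = LinearMap.id) ∧
    (∃ (f : (Fin (n - 1) → ℤ) →ₗ[ℤ] ((ZMod n → ℤ) × ℤ))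
        (q : ((ZMod n → ℤ) × ℤ) →ₗ[ℤ] ℤ × ℤ),
      (∀ (g : DihedralGroup n) x, f (ρNp g x) = ρMm g (f x)) ∧
      (∀ (g : DihedralGroup n) x, q (ρMm g x) = ρA g (q x)) ∧
      Function.Injective f ∧ Function.Surjective q ∧
      LinearMap.range f = LinearMap.ker q ∧
      ¬ ∃ s : ℤ × ℤ →ₗ[ℤ] ((ZMod n → ℤ) × ℤ),
          (∀ (g : DihedralGroup n) y, ρMm g (s y) = s (ρA g y)) ∧
          q.comp s = LinearMap.id) := by
  obtain ⟨m, hm0⟩ := hodd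
  have hm' : n = 2 * m + 1 := by omega
  have hnz : (n : ℤ) = 2 * (m : ℤ) + 1 := by exact_mod_cast congrArg (Nat.cast : ℕ → ℤ) hm'
  have hmZ1 : 1 ≤ (m : ℤ) := by
    have : 1 ≤ m := by omega
    exact_mod_cast this
  set c : ZMod n := ((m + 1 : ℕ) : ZMod n) with hcdef
  have hc : c + c = 1 := by
    have h1 : ((m + 1 : ℕ) : ZMod n) + ((m + 1 : ℕ) : ZMod n) = ((n + 1 : ℕ) : ZMod n) := by
      rw [← Nat.cast_add]; congr 1; omega
    rw [hcdef, h1]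
    push_cast [ZMod.natCast_self]
    ring
  constructor
  · refine Stmt7Aux.master hn m hm' c hc 1 1 (m : ℤ) 1 ((m : ℤ) + 1)
      (by norm_num) (by rw [hnz]; ring) (by norm_num) (by rw [hnz]; ring) (by ring) ?_
      ρNm hNmσ hNmσ' ?_ ρMp hMpσ hMpσw ?_ ?_ ρA hAσ hAτ
    · intro w z h
      obtain ⟨e1, e2⟩ := h
      rw [hnz] at e1 e2
      have hzv : z = -1 := by linarith
      rw [hzv] at e1
      rcases le_or_gt w 0 with h' | h'
      · nlinarith
      · nlinarith
    · intro j; rw [hNmτ j]; simp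
    · intro i; rw [hMpτ i]; simp
    · rw [hMpτw]; simp
  · refine Stmt7Aux.master hn m hm' c hc (-1) 1 ((m : ℤ) + 1) (-1) (-(m : ℤ))
      (by norm_num) (by rw [hnz]; ring) (by norm_num) (by rw [hnz]; ring) (by ring) ?_
      ρNp hNpσ hNpσ' ?_ ρMm hMmσ hMmσw ?_ ?_ ρA hAσ hAτ
    · intro w z h
      obtain ⟨e1, e2⟩ := h
      rw [hnz] at e1 e2
      have hzv : z = 1 := by linarith
      rw [hzv] at e1
      rcases le_or_gt w (-1) with h' | h'
      · nlinarith [mul_nonneg (by linarith : (0:ℤ) ≤ 2*(m:ℤ)+1) (by linarith : (0:ℤ) ≤ -1 - w)]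
      · have hw0 : 0 ≤ w := by omega
        nlinarith [mul_nonneg (by linarith : (0:ℤ) ≤ 2*(m:ℤ)+1) hw0]
    · intro j; rw [hNpτ j]; simp
    · intro i; rw [hMmτ i]; simp
    · rw [hMmτw]; simp
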